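/- Let p be an odd prime. The automorphism group of the group DihedralGroup p × ZMod p of order 2p^2 has order p(p-1)^2. -/

import Mathlib

open DihedralGroup

section Dihedral

variable {p : ℕ}

lemma r_pow (i : ZMod p) (k : ℕ) : (r i : DihedralGroup p) ^ k = r ((k : ZMod p) * i) := by
  induction k with
  | zero => simp
  | succ n ih => rw [pow_succ, ih, r_mul_r]; congr 1; push_cast; ring

/-- The automorphism of the dihedral group sending `r i ↦ r (a*i)`, `sr i ↦ sr (b + a*i)`. -/
def dihAut (a : (ZMod p)ˣ) (b : ZMod p) : DihedralGroup p ≃* DihedralGroup p where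
  toFun x := match x with
    | .r i => r (a * i)
    | .sr i => sr (b + a * i)
  invFun x := match x with
    | .r i => r ((a⁻¹ : (ZMod p)ˣ) * i)
    | .sr i => sr ((a⁻¹ : (ZMod p)ˣ) * (i - b))
  left_inv := by
    rintro (i | i) <;> simp [← mul_assoc, ← Units.val_mul]
  right_inv := by
    rintro (i | i) <;>
      simp [mul_sub, ← mul_assoc, ← Units.val_mul, mul_add]
  map_mul' := by
    rintro (i | i) (j | j) <;>
      simp only [r_mul_r, r_mul_sr, sr_mul_r, sr_mul_sr] <;> ring_nf

lemma two_ne_zero_zmod (hp : p.Prime) (hodd : Odd p) : (2 : ZMod p) ≠ 0 := by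
  intro h
  have h2 : (p : ℕ) ∣ 2 := by
    have := (ZMod.natCast_eq_zero_iff 2 p).mp (by exact_mod_cast h)
    exact this
  have := Nat.le_of_dvd (by norm_num) h2
  have h1 := hp.two_le
  rcases Nat.odd_iff.mp hodd with h3
  omega

lemma card_mulAut_dihedral (hp : p.Prime) (hodd : Odd p) :
    Nat.card (MulAut (DihedralGroup p)) = (p - 1) * p := by
  haveI := Fact.mk hp
  haveI : NeZero p := ⟨hp.ne_zero⟩
  have hbij : Function.Bijective
      (fun ab : (ZMod p)ˣ × ZMod p => (dihAut ab.1 ab.2 : MulAut (DihedralGroup p))) := by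
    constructor
    · rintro ⟨a, b⟩ ⟨a', b'⟩ h
      have h1 := congrArg (fun φ : MulAut (DihedralGroup p) => φ (r 1)) h
      have h2 := congrArg (fun φ : MulAut (DihedralGroup p) => φ (sr 0)) h
      simp only [dihAut, MulEquiv.coe_mk, Equiv.coe_fn_mk] at h1 h2
      have ha : (a : ZMod p) = a' := by simpa using h1
      have hb : b = b' := by simpa using h2
      exact Prod.ext (Units.ext ha) hb
    · intro φ
      -- φ (r 1) is a rotation r a with a ≠ 0
      have hord1 : orderOf (φ (r 1)) = p := by
        rw [MulEquiv.orderOf_eq, orderOf_r_one]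
      have hp2 : p ≠ 2 := by rintro rfl; simp [Nat.odd_iff] at hodd
      obtain ⟨a, ha⟩ : ∃ a : ZMod p, φ (r 1) = r a := by
        rcases h : φ (r 1) with i | i
        · exact ⟨i, rfl⟩
        · rw [h, orderOf_sr] at hord1; exact absurd hord1.symm hp2
      have ha0 : a ≠ 0 := by
        rintro rfl
        rw [ha, ← one_def, orderOf_one] at hord1
        exact hp.one_lt.ne hord1
      obtain ⟨b, hb⟩ : ∃ b : ZMod p, φ (sr 0) = sr b := by
        have hord2 : orderOf (φ (sr 0)) = 2 := by rw [MulEquiv.orderOf_eq, orderOf_sr]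
        rcases h : φ (sr 0) with i | i
        · rw [h, orderOf_r] at hord2
          have hg : Nat.gcd p (ZMod.val i) ∣ p := Nat.gcd_dvd_left _ _
          rcases (Nat.dvd_prime hp).mp hg with hg1 | hg1
          · rw [hg1, Nat.div_one] at hord2; exact absurd hord2 hp2
          · rw [hg1, Nat.div_self hp.pos] at hord2; omega
        · exact ⟨i, rfl⟩
      refine ⟨⟨Units.mk0 a ha0, b⟩, ?_⟩
      ext x
      have key : ∀ i : ZMod p, φ (r i) = r (a * i) := by
        intro i
        have h2 : (r i : DihedralGroup p) = r 1 ^ (ZMod.val i) := by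
          rw [_root_.r_pow, mul_one, ZMod.natCast_val, ZMod.cast_id]
        rw [h2, map_pow, ha, _root_.r_pow]
        congr 1
        rw [ZMod.natCast_val, ZMod.cast_id, mul_comm]
      rcases x with i | i
      · show r ((Units.mk0 a ha0 : ZMod p) * i) = φ (r i)
        rw [key i, Units.val_mk0]
      · have hx : (sr i : DihedralGroup p) = sr 0 * r i := by
          rw [sr_mul_r, zero_add]
        show sr (b + (Units.mk0 a ha0 : ZMod p) * i) = φ (sr i)
        rw [hx, map_mul, hb, key i, sr_mul_r, Units.val_mk0]
  rw [← Nat.card_eq_of_bijective _ hbij, Nat.card_prod, Nat.card_eq_fintype_card,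
    Nat.card_eq_fintype_card, ZMod.card_units_eq_totient, ZMod.card, Nat.totient_prime hp]

end Dihedral

section Prod

variable {p : ℕ}

/-- The image of a central element has trivial first component. -/
lemma fst_of_center (hp : p.Prime) (hodd : Odd p)
    (φ : (DihedralGroup p × Multiplicative (ZMod p)) ≃*
      (DihedralGroup p × Multiplicative (ZMod p)))
    (b : Multiplicative (ZMod p)) : (φ (1, b)).1 = 1 := by
  haveI := Fact.mk hp
  have hcomm : ∀ z, z * φ (1, b) = φ (1, b) * z := by
    intro z
    have h0 : φ.symm z * (1, b) = (1, b) * φ.symm z := by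
      refine Prod.ext ?_ ?_
      · show (φ.symm z).1 * 1 = 1 * (φ.symm z).1
        rw [mul_one, one_mul]
      · exact mul_comm _ _
    have := congrArg φ h0
    rw [map_mul, map_mul, MulEquiv.apply_symm_apply] at this
    exact this
  have hx : ∀ g : DihedralGroup p, g * (φ (1, b)).1 = (φ (1, b)).1 * g := by
    intro g
    exact congrArg Prod.fst (hcomm (g, 1))
  rcases h : (φ (1, b)).1 with i | i
  · have := hx (sr 0)
    rw [h, sr_mul_r, r_mul_sr, zero_add, zero_sub] at this
    have hi : i = -i := by injection this
    have h2 : (2 : ZMod p) * i = 0 := by linear_combination hi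
    have h3 : i = 0 := (mul_eq_zero.mp h2).resolve_left (two_ne_zero_zmod hp hodd)
    rw [h3]
    rfl
  · have := hx (r 1)
    rw [h, r_mul_sr, sr_mul_r] at this
    have hi : i - 1 = i + 1 := by injection this
    have : (2 : ZMod p) = 0 := by linear_combination -hi
    exact absurd this (two_ne_zero_zmod hp hodd)

/-- The image of an element of the dihedral factor has trivial second component. -/
lemma snd_of_dihedral (hp : p.Prime) (hodd : Odd p)
    (φ : (DihedralGroup p × Multiplicative (ZMod p)) ≃*
      (DihedralGroup p × Multiplicative (ZMod p)))
    (a : DihedralGroup p) : (φ (a, 1)).2 = 1 := by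
  haveI := Fact.mk hp
  have hrefl : ∀ i : ZMod p, (φ (sr i, 1)).2 = 1 := by
    intro i
    have hsq : φ (sr i, 1) * φ (sr i, 1) = 1 := by
      rw [← map_mul]
      have : ((sr i, 1) : DihedralGroup p × Multiplicative (ZMod p)) * (sr i, 1) = 1 := by
        refine Prod.ext ?_ ?_
        · exact sr_mul_self i
        · exact one_mul 1
      rw [this, map_one]
    have h2 : (φ (sr i, 1)).2 * (φ (sr i, 1)).2 = 1 := congrArg Prod.snd hsq
    have h3 : Multiplicative.toAdd ((φ (sr i, 1)).2) + Multiplicative.toAdd ((φ (sr i, 1)).2)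
        = 0 := h2
    have h4 : (2 : ZMod p) * Multiplicative.toAdd ((φ (sr i, 1)).2) = 0 := by
      rw [two_mul]; exact h3
    have h5 : Multiplicative.toAdd ((φ (sr i, 1)).2) = 0 :=
      (mul_eq_zero.mp h4).resolve_left (two_ne_zero_zmod hp hodd)
    exact h5
  rcases a with i | i
  · have hri : ((r i, 1) : DihedralGroup p × Multiplicative (ZMod p))
        = (sr 0, 1) * (sr i, 1) := by
      refine Prod.ext ?_ ?_
      · show r i = sr 0 * sr i
        rw [sr_mul_sr, sub_zero]
      · exact (one_mul 1).symm
    rw [hri, map_mul]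
    show (φ (sr 0, 1)).2 * (φ (sr i, 1)).2 = 1
    rw [hrefl 0, hrefl i, one_mul]
  · exact hrefl i

end Prod

/-- The automorphism group of `DihedralGroup p × ZMod p` (`p` an odd prime), a group of
order `2 p ^ 2`, has order `p (p-1)^2`. -/
theorem card_mulAut_dihedral_prod_cyclic (p : ℕ) (hp : p.Prime) (hodd : Odd p) :
    Nat.card (MulAut (DihedralGroup p × Multiplicative (ZMod p))) = p * (p - 1) ^ 2 := by
  haveI := Fact.mk hp
  haveI : NeZero p := ⟨hp.ne_zero⟩
  set D := DihedralGroup p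
  set M := Multiplicative (ZMod p)
  have hbij : Function.Bijective
      (fun αβ : MulAut D × MulAut M => (MulEquiv.prodCongr αβ.1 αβ.2 : MulAut (D × M))) := by
    constructor
    · rintro ⟨α, β⟩ ⟨α', β'⟩ h
      refine Prod.ext ?_ ?_
      · refine MulEquiv.ext fun a => ?_
        have := congrArg (fun ψ : MulAut (D × M) => (ψ (a, 1)).1) h
        exact this
      · refine MulEquiv.ext fun b => ?_
        have := congrArg (fun ψ : MulAut (D × M) => (ψ (1, b)).2) h
        exact this
    · intro φ
      have hφ1 : ∀ a : D, φ (a, 1) = ((φ (a, 1)).1, 1) :=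
        fun a => Prod.ext rfl (snd_of_dihedral hp hodd φ a)
      have hψ1 : ∀ a : D, φ.symm (a, 1) = ((φ.symm (a, 1)).1, 1) :=
        fun a => Prod.ext rfl (snd_of_dihedral hp hodd φ.symm a)
      have hφ2 : ∀ b : M, φ (1, b) = (1, (φ (1, b)).2) :=
        fun b => Prod.ext (fst_of_center hp hodd φ b) rfl
      have hψ2 : ∀ b : M, φ.symm (1, b) = (1, (φ.symm (1, b)).2) :=
        fun b => Prod.ext (fst_of_center hp hodd φ.symm b) rfl
      refine ⟨⟨⟨⟨fun a => (φ (a, 1)).1, fun a => (φ.symm (a, 1)).1, ?_, ?_⟩, ?_⟩,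
        ⟨⟨fun b => (φ (1, b)).2, fun b => (φ.symm (1, b)).2, ?_, ?_⟩, ?_⟩⟩, ?_⟩
      · intro a
        show (φ.symm ((φ (a, 1)).1, 1)).1 = a
        rw [← hφ1 a, MulEquiv.symm_apply_apply]
      · intro a
        show (φ ((φ.symm (a, 1)).1, 1)).1 = a
        rw [← hψ1 a, MulEquiv.apply_symm_apply]
      · intro a a'
        show (φ (a * a', 1)).1 = (φ (a, 1)).1 * (φ (a', 1)).1
        have : ((a * a', 1) : D × M) = (a, 1) * (a', 1) := by
          refine Prod.ext rfl (one_mul 1).symm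
        rw [this, map_mul]
        rfl
      · intro b
        show (φ.symm (1, (φ (1, b)).2)).2 = b
        rw [← hφ2 b, MulEquiv.symm_apply_apply]
      · intro b
        show (φ (1, (φ.symm (1, b)).2)).2 = b
        rw [← hψ2 b, MulEquiv.apply_symm_apply]
      · intro b b'
        show (φ (1, b * b')).2 = (φ (1, b)).2 * (φ (1, b')).2
        have : ((1, b * b') : D × M) = (1, b) * (1, b') := by
          refine Prod.ext (one_mul 1).symm rfl
        rw [this, map_mul]
        rfl
      · refine MulEquiv.ext fun x => ?_
        rcases x with ⟨a, b⟩
        have hab : ((a, b) : D × M) = (a, 1) * (1, b) := by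
          refine Prod.ext (mul_one a).symm (one_mul b).symm
        conv_rhs => rw [hab, map_mul]
        refine Prod.ext ?_ ?_
        · show (φ (a, 1)).1 = (φ (a, 1)).1 * (φ (1, b)).1
          rw [fst_of_center hp hodd φ b, mul_one]
        · show (φ (1, b)).2 = (φ (a, 1)).2 * (φ (1, b)).2
          rw [snd_of_dihedral hp hodd φ a, one_mul]
  have hM : Nat.card (MulAut M) = p - 1 := by
    rw [IsCyclic.card_mulAut, Nat.card_eq_fintype_card, Fintype.card_multiplicative,
      ZMod.card, Nat.totient_prime hp]
  rw [← Nat.card_eq_of_bijective _ hbij, Nat.card_prod, hM, card_mulAut_dihedral hp hodd]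
  ring
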